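/- Let d be the metric d(x,y) = Σ_{n∈ℕ} 2^{-n} · min(1, |x n − y n|) on ℝ^ℕ. For every m ∈ ℕ, all continuous maps f₁, f₂ : [0,1]^m → ℝ^ℕ and every ε > 0, there exist continuous maps g₁, g₂ : [0,1]^m → ℝ^ℕ such that d(gᵢ(p), fᵢ(p)) ≤ ε for all p ∈ [0,1]^m and i ∈ {1,2}, and the images g₁([0,1]^m) and g₂([0,1]^m) are disjoint. -/

import Mathlib

/-- The metric `d(x,y) = Σ_{n∈ℕ} 2^{-n} · min(1, |x n − y n|)` on `ℝ^ℕ`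
(which induces the product topology). -/
noncomputable def dSeq (x y : ℕ → ℝ) : ℝ :=
  ∑' n : ℕ, (2 : ℝ) ^ (-(n : ℤ)) * min 1 |x n - y n|

theorem stmt9 (m : ℕ) (f₁ f₂ : (Fin m → unitInterval) → (ℕ → ℝ))
    (hf₁ : Continuous f₁) (hf₂ : Continuous f₂) :
    ∀ ε > (0 : ℝ), ∃ g₁ g₂ : (Fin m → unitInterval) → (ℕ → ℝ),
      Continuous g₁ ∧ Continuous g₂ ∧
      (∀ p, dSeq (g₁ p) (f₁ p) ≤ ε) ∧ (∀ p, dSeq (g₂ p) (f₂ p) ≤ ε) ∧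
      Disjoint (Set.range g₁) (Set.range g₂) := by
  intro ε hε
  obtain ⟨n, hn⟩ := exists_pow_lt_of_lt_one hε (by norm_num : (1/2 : ℝ) < 1)
  have hpow : (2 : ℝ) ^ (-(n : ℤ)) ≤ ε := by
    rw [zpow_neg, ← one_div]
    calc (1 / (2:ℝ) ^ (n:ℤ)) = (1/2 : ℝ) ^ n := by
          rw [div_pow, one_pow, zpow_natCast]
      _ ≤ ε := hn.le
  set g₁ : (Fin m → unitInterval) → (ℕ → ℝ) :=
    fun p k => if k = n then 0 else f₁ p k with hg₁
  set g₂ : (Fin m → unitInterval) → (ℕ → ℝ) :=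
    fun p k => if k = n then 1 else f₂ p k with hg₂
  have key : ∀ (g f : (Fin m → unitInterval) → (ℕ → ℝ)),
      (∀ p k, k ≠ n → g p k = f p k) → ∀ p, dSeq (g p) (f p) ≤ ε := by
    intro g f hgf p
    have h0 : ∀ k, k ≠ n →
        (2 : ℝ) ^ (-(k : ℤ)) * min 1 |g p k - f p k| = 0 := by
      intro k hk
      rw [hgf p k hk]
      simp
    have : dSeq (g p) (f p)
        = (2 : ℝ) ^ (-(n : ℤ)) * min 1 |g p n - f p n| :=
      tsum_eq_single n h0
    rw [this]
    calc (2 : ℝ) ^ (-(n : ℤ)) * min 1 |g p n - f p n|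
        ≤ (2 : ℝ) ^ (-(n : ℤ)) * 1 := by
          apply mul_le_mul_of_nonneg_left (min_le_left _ _) (by positivity)
      _ ≤ ε := by rwa [mul_one]
  refine ⟨g₁, g₂, ?_, ?_, ?_, ?_, ?_⟩
  · exact continuous_pi fun k => by
      by_cases hk : k = n
      · simpa [hg₁, hk] using continuous_const
      · simpa [hg₁, hk, Function.comp_def] using (continuous_apply k).comp hf₁
  · exact continuous_pi fun k => by
      by_cases hk : k = n
      · simpa [hg₂, hk] using continuous_const
      · simpa [hg₂, hk, Function.comp_def] using (continuous_apply k).comp hf₂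
  · exact key g₁ f₁ (fun p k hk => by simp [hg₁, hk]) 
  · exact key g₂ f₂ (fun p k hk => by simp [hg₂, hk])
  · rw [Set.disjoint_left]
    rintro x ⟨p, rfl⟩ ⟨q, hq⟩
    have := congrFun hq n
    simp [hg₁, hg₂] at this
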